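/- The Fourier cosine integral of the periodic logarithmic kernel: for every positive integer m and every x ∈ ℝ, −(1/(4π))·∫_{−L}^{L} ln(4·sin²((π/(2L))(x − x₀)))·cos((mπ/L)·x₀) dx₀ = (L/(2πm))·cos((mπ/L)·x). -/

import Mathlib

open Real intervalIntegral MeasureTheory Set Filter Topology

noncomputable section


/-- trigonometric summation identity -/
lemma aux_cot_id (m : ℕ) (t : ℝ) :
    Real.cos (t/2) * Real.sin (m * t)
      = Real.sin (t/2) * (2 * (∑ k ∈ Finset.range m, Real.cos (k * t)) - 1 + Real.cos (m * t)) := by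
  induction m with
  | zero => simp
  | succ n ih =>
    have hc : Real.cos t = 1 - 2 * Real.sin (t/2)^2 := by
      have h := Real.sin_sq_eq_half_sub (t/2)
      have h2 : 2 * (t/2) = t := by ring
      rw [h2] at h; linarith
    have hs : Real.sin t = 2 * Real.sin (t/2) * Real.cos (t/2) := by
      have h := Real.sin_two_mul (t/2)
      have h2 : 2 * (t/2) = t := by ring
      rw [h2] at h; linarith
    have hcast : ((n+1 : ℕ) : ℝ) * t = (n : ℝ) * t + t := by push_cast; ring
    rw [Finset.sum_range_succ, hcast, Real.sin_add, Real.cos_add, hc, hs]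
    have hpy := Real.sin_sq_add_cos_sq (t/2)
    linear_combination ih + 2*Real.sin (t/2)*Real.cos ((n:ℝ)*t)*hpy

/-- pointwise bound for the log kernel on `(0, π]` -/
lemma aux_bound {t : ℝ} (ht0 : 0 < t) (htπ : t ≤ π) :
    |Real.log (4 * Real.sin (t/2)^2)| ≤ 2*(Real.log π - Real.log t) + Real.log 4 := by
  have hπ := Real.pi_pos
  have hs0 : 0 < Real.sin (t/2) :=
    Real.sin_pos_of_pos_of_lt_pi (by linarith) (by linarith)
  have h4s : (0:ℝ) < 4 * Real.sin (t/2)^2 := by positivity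
  have hlogt : Real.log t ≤ Real.log π := Real.log_le_log ht0 htπ
  have hlog4 : (0:ℝ) ≤ Real.log 4 := Real.log_nonneg (by norm_num)
  have hub : Real.log (4 * Real.sin (t/2)^2) ≤ Real.log 4 := by
    apply Real.log_le_log h4s
    nlinarith [Real.sin_le_one (t/2), hs0]
  have hsin_ge : t/π ≤ Real.sin (t/2) := by
    have h := Real.mul_le_sin (x := t/2) (by linarith) (by linarith)
    calc t/π = 2/π * (t/2) := by ring
    _ ≤ Real.sin (t/2) := h
  have hlb : Real.log 4 + 2*Real.log t - 2*Real.log π ≤ Real.log (4 * Real.sin (t/2)^2) := by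
    have h1 : Real.log (4 * (t/π)^2) ≤ Real.log (4 * Real.sin (t/2)^2) := by
      apply Real.log_le_log (by positivity)
      have h0 : (0:ℝ) ≤ t/π := (div_pos ht0 hπ).le
      have := pow_le_pow_left₀ h0 hsin_ge 2
      linarith
    have h2 : Real.log (4 * (t/π)^2) = Real.log 4 + 2*Real.log t - 2*Real.log π := by
      rw [Real.log_mul (by norm_num) (by positivity), Real.log_pow,
        Real.log_div ht0.ne' hπ.ne']
      push_cast; ring
    linarith
  rw [abs_le]
  constructor <;> linarith

/-- interval integrability of the log kernel on every interval -/
lemma aux_intInt (a b : ℝ) :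
    IntervalIntegrable (fun t => Real.log (4 * Real.sin (t/2)^2)) volume a b := by
  have hπ := Real.pi_pos
  have hmeas : Measurable fun t : ℝ => Real.log (4 * Real.sin (t/2)^2) := by
    apply Real.measurable_log.comp
    fun_prop
  -- integrability of the bound on (0, π]
  have hgint : IntegrableOn (fun t => 2*(Real.log π - Real.log t) + Real.log 4) (Ioc 0 π) volume := by
    apply intervalIntegral.integrableOn_deriv_of_nonneg
      (g := fun t => 2*(t*Real.log π - (t*Real.log t - t)) + t*Real.log 4)
    · apply Continuous.continuousOn
      exact ((continuous_const.mul ((continuous_id.mul continuous_const).sub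
        (Real.continuous_mul_log.sub continuous_id))).add
        (continuous_id.mul continuous_const))
    · intro x hx
      have h1 : HasDerivAt (fun t : ℝ => t * Real.log t) (Real.log x + 1) x :=
        Real.hasDerivAt_mul_log hx.1.ne'
      have h2 : HasDerivAt (fun t : ℝ =>
          2*(t*Real.log π - (t*Real.log t - t)) + t*Real.log 4)
          (2*(1*Real.log π - ((Real.log x + 1) - 1)) + 1*Real.log 4) x := by
        exact ((((hasDerivAt_id x).mul_const (Real.log π)).sub
          (h1.sub (hasDerivAt_id x))).const_mul 2).add ((hasDerivAt_id x).mul_const (Real.log 4))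
      convert h2 using 1
      ring
    · intro x hx
      have hlogx : Real.log x ≤ Real.log π := Real.log_le_log hx.1 hx.2.le
      have hlog4 : (0:ℝ) ≤ Real.log 4 := Real.log_nonneg (by norm_num)
      linarith
  -- integrability on 0..π
  have h0π : IntervalIntegrable (fun t => Real.log (4 * Real.sin (t/2)^2)) volume 0 π := by
    rw [intervalIntegrable_iff, uIoc_of_le hπ.le]
    apply Integrable.mono' hgint (hmeas.aestronglyMeasurable.restrict)
    rw [ae_restrict_iff' measurableSet_Ioc]
    filter_upwards with t ht
    rw [Real.norm_eq_abs]
    exact aux_bound ht.1 ht.2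
  -- integrability on -π..0 by evenness
  have hI0 : IntervalIntegrable (fun t => Real.log (4 * Real.sin (t/2)^2)) volume (-π) 0 := by
    have h := h0π.comp_mul_left (c := -1)
    have e : (fun x : ℝ => Real.log (4 * Real.sin ((-1*x)/2)^2))
        = fun t => Real.log (4 * Real.sin (t/2)^2) := by
      funext x
      rw [show (-1*x)/2 = -(x/2) by ring, Real.sin_neg, neg_sq]
    rw [e] at h
    have e2 : (0:ℝ) / (-1) = 0 := by norm_num
    have e3 : π / (-1) = -π := by ring
    rw [e2, e3] at h
    exact h.symm
  have hIpm : IntervalIntegrable (fun t => Real.log (4 * Real.sin (t/2)^2)) volume (-π) π :=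
    hI0.trans h0π
  -- periodicity
  have hper : Function.Periodic (fun t => Real.log (4 * Real.sin (t/2)^2)) (2*π) := by
    intro u
    show Real.log (4 * Real.sin ((u + 2*π)/2)^2) = Real.log (4 * Real.sin (u/2)^2)
    rw [show (u + 2*π)/2 = u/2 + π by ring, Real.sin_add_pi, neg_sq]
  have hk : ∀ k : ℤ, IntervalIntegrable (fun t => Real.log (4 * Real.sin (t/2)^2)) volume
      (-π + k*(2*π)) (π + k*(2*π)) := by
    intro k
    have h := hIpm.comp_add_right ((-k)*(2*π))
    have e : (fun x : ℝ => Real.log (4 * Real.sin ((x + (-k)*(2*π))/2)^2))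
        = fun t => Real.log (4 * Real.sin (t/2)^2) := by
      funext x
      have := (hper.int_mul (-k)) x
      simpa using this
    rw [e] at h
    have e1 : -π - (-k)*(2*π) = -π + k*(2*π) := by push_cast; ring
    have e2 : π - (-k)*(2*π) = π + k*(2*π) := by push_cast; ring
    rwa [e1, e2] at h
  -- big symmetric intervals
  have hn : ∀ n : ℕ, IntervalIntegrable (fun t => Real.log (4 * Real.sin (t/2)^2)) volume
      (-((2*n+1)*π)) ((2*n+1)*π) := by
    intro n
    induction n with
    | zero => simpa using hIpm
    | succ p ih =>
      have hl := hk (-(p+1))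
      have hr := hk (p+1)
      have el1 : -π + (-(p+1) : ℤ)*(2*π) = -((2*(p+1)+1)*π) := by push_cast; ring
      have el2 : π + (-(p+1) : ℤ)*(2*π) = -((2*p+1)*π) := by push_cast; ring
      have er1 : -π + ((p+1 : ℤ))*(2*π) = (2*p+1)*π := by push_cast; ring
      have er2 : π + ((p+1 : ℤ))*(2*π) = (2*(p+1)+1)*π := by push_cast; ring
      rw [el1, el2] at hl
      rw [er1, er2] at hr
      have := (hl.trans ih).trans hr
      convert this using 2 <;> push_cast <;> ring
  -- general interval
  obtain ⟨n, hnn⟩ := exists_nat_ge (max |a| |b| / π)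
  have hbig : max |a| |b| ≤ (2*n+1)*π := by
    have h1 : max |a| |b| ≤ n * π := by
      rw [div_le_iff₀ hπ] at hnn
      exact hnn
    nlinarith [hπ]
  apply (hn n).mono_set
  have hord : -((2*(n:ℝ)+1)*π) ≤ (2*(n:ℝ)+1)*π := by nlinarith [hπ]
  have ha' : |a| ≤ (2*(n:ℝ)+1)*π := le_trans (le_max_left _ _) hbig
  have hb' : |b| ≤ (2*(n:ℝ)+1)*π := le_trans (le_max_right _ _) hbig
  apply uIcc_subset_uIcc <;> rw [uIcc_of_le hord, mem_Icc] <;> constructor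
  · linarith [neg_abs_le a]
  · linarith [le_abs_self a]
  · linarith [neg_abs_le b]
  · linarith [le_abs_self b]



lemma aux_hasDeriv (t : ℝ) (hs : Real.sin (t/2) ≠ 0) :
    HasDerivAt (fun u => Real.log (4 * Real.sin (u/2)^2)) (Real.cos (t/2) / Real.sin (t/2)) t := by
  have h1 : HasDerivAt (fun u : ℝ => u/2) (1/2) t := (hasDerivAt_id t).div_const 2
  have h2 : HasDerivAt (fun u : ℝ => Real.sin (u/2)) (Real.cos (t/2) * (1/2)) t :=
    by have := (Real.hasDerivAt_sin (t/2)).comp t h1; exact this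
  have h3 : HasDerivAt (fun u : ℝ => 4 * Real.sin (u/2)^2)
      (4 * ((2:ℕ) * Real.sin (t/2)^1 * (Real.cos (t/2) * (1/2)))) t := (h2.pow 2).const_mul 4
  have h4s : 4 * Real.sin (t/2)^2 ≠ 0 := by
    intro h
    apply hs
    nlinarith [sq_nonneg (Real.sin (t/2))]
  have h4 := h3.log h4s
  convert h4 using 1
  field_simp
  ring

lemma aux_sum_deriv (m : ℕ) (t : ℝ) :
    HasDerivAt (fun u => ∑ k ∈ Finset.range m, (if k = 0 then u else Real.sin (k*u)/k))
      (∑ k ∈ Finset.range m, Real.cos (k*t)) t := by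
  have h := HasDerivAt.fun_sum (u := Finset.range m)
    (A := fun k u => (if k = 0 then u else Real.sin (k*u)/k)) (A' := fun k => Real.cos (k*t)) (x := t) ?_
  · exact h
  intro k _
  by_cases hk : k = 0
  · subst hk
    simp only [if_true, Nat.cast_zero, zero_mul, Real.cos_zero]
    exact hasDerivAt_id' t
  · simp only [if_neg hk]
    have hk' : (k:ℝ) ≠ 0 := Nat.cast_ne_zero.mpr hk
    have h1 : HasDerivAt (fun u : ℝ => (k:ℝ) * u) ((k:ℝ) * 1) t := (hasDerivAt_id t).const_mul _
    have h2 : HasDerivAt (fun u : ℝ => Real.sin ((k:ℝ)*u)) (Real.cos ((k:ℝ)*t) * ((k:ℝ)*1)) t :=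
      (Real.hasDerivAt_sin ((k:ℝ)*t)).comp t h1
    have := h2.div_const (k:ℝ)
    exact this.congr_deriv (by field_simp)

lemma aux_key (m : ℕ) (hm : 0 < m) :
    ∫ t in (0:ℝ)..π, Real.log (4 * Real.sin (t/2)^2) * Real.cos (m*t) = -π/m := by
  have hπ := Real.pi_pos
  have hm' : (m:ℝ) ≠ 0 := Nat.cast_ne_zero.mpr hm.ne'
  set G : ℝ → ℝ := fun t =>
    Real.log (4 * Real.sin (t/2)^2) * Real.sin (m*t) / m
      - (2 * (∑ k ∈ Finset.range m, (if k = 0 then t else Real.sin (k*t)/k)) - t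
          + Real.sin (m*t)/m) / m with hGdef
  have hderiv : ∀ t ∈ Ioo (0:ℝ) π, HasDerivAt G (Real.log (4 * Real.sin (t/2)^2) * Real.cos (m*t)) t := by
    intro t ht
    have hs : 0 < Real.sin (t/2) :=
      Real.sin_pos_of_pos_of_lt_pi (by linarith [ht.1]) (by linarith [ht.2])
    have hmt : HasDerivAt (fun u : ℝ => Real.sin ((m:ℝ)*u)) (Real.cos ((m:ℝ)*t) * ((m:ℝ)*1)) t :=
      (Real.hasDerivAt_sin ((m:ℝ)*t)).comp t ((hasDerivAt_id t).const_mul _)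
    have hA : HasDerivAt (fun u => Real.log (4 * Real.sin (u/2)^2) * Real.sin ((m:ℝ)*u))
        (Real.cos (t/2) / Real.sin (t/2) * Real.sin ((m:ℝ)*t)
          + Real.log (4 * Real.sin (t/2)^2) * (Real.cos ((m:ℝ)*t) * ((m:ℝ)*1))) t :=
      (aux_hasDeriv t hs.ne').mul hmt
    have hB : HasDerivAt (fun u => 2 * (∑ k ∈ Finset.range m, (if k = 0 then u else Real.sin (k*u)/k)) - u
          + Real.sin ((m:ℝ)*u)/m)
        (2 * (∑ k ∈ Finset.range m, Real.cos ((k:ℝ)*t)) - 1 + (Real.cos ((m:ℝ)*t) * ((m:ℝ)*1))/m) t :=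
      (((aux_sum_deriv m t).const_mul 2).sub (hasDerivAt_id t)).add (hmt.div_const _)
    have hG := (hA.div_const (m:ℝ)).sub (hB.div_const (m:ℝ))
    refine hG.congr_deriv ?_
    symm
    have hid : Real.cos (t/2) / Real.sin (t/2) * Real.sin ((m:ℝ)*t)
        = 2 * (∑ k ∈ Finset.range m, Real.cos ((k:ℝ)*t)) - 1 + Real.cos ((m:ℝ)*t) := by
      rw [div_mul_eq_mul_div, aux_cot_id m t, mul_comm, mul_div_assoc, div_self hs.ne',
        mul_one]
    rw [hid]
    field_simp
    ring
  have hint : IntervalIntegrable (fun t => Real.log (4*Real.sin (t/2)^2) * Real.cos ((m:ℝ)*t)) volume 0 π :=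
    (aux_intInt 0 π).mul_continuousOn (Continuous.continuousOn (by fun_prop))
  -- limit at π
  have hbb : Tendsto G (𝓝[<] π) (𝓝 (-π/m)) := by
    have hcont : ContinuousAt G π := by
      have h1 : ContinuousAt (fun u : ℝ => Real.log (4 * Real.sin (u/2)^2)) π := by
        apply (Real.continuousAt_log ?_).comp (by fun_prop)
        simp [Real.sin_pi_div_two]
      have h2 : Continuous (fun u : ℝ => ∑ k ∈ Finset.range m,
          (if k = 0 then u else Real.sin (k*u)/k)) := by
        apply continuous_finset_sum
        intro k _
        by_cases hk : k = 0
        · simp only [if_pos hk]; exact continuous_id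
        · simp only [if_neg hk]; fun_prop
      rw [hGdef]
      have h3 : Continuous (fun u : ℝ => Real.sin ((m:ℝ)*u)) := by fun_prop
      exact ((h1.mul h3.continuousAt).div_const _).sub
        ((((continuousAt_const.mul h2.continuousAt).sub continuousAt_id).add
          (h3.continuousAt.div_const _)).div_const _)
    have hval : G π = -π/m := by
      have hsum : (∑ k ∈ Finset.range m, (if k = 0 then π else Real.sin ((k:ℝ)*π)/k)) = π := by
        rw [Finset.sum_eq_single_of_mem 0 (Finset.mem_range.mpr hm)]
        · simp
        · intro k _ hk
          simp [if_neg hk, Real.sin_nat_mul_pi]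
      simp only [hGdef]
      rw [hsum, Real.sin_nat_mul_pi]
      ring
    rw [← hval]
    exact hcont.continuousWithinAt.tendsto
  -- limit at 0
  have haa : Tendsto G (𝓝[>] (0:ℝ)) (𝓝 0) := by
    have hP2 : Tendsto (fun t => (2 * (∑ k ∈ Finset.range m, (if k = 0 then t else Real.sin (k*t)/k)) - t
          + Real.sin ((m:ℝ)*t)/m) / m) (𝓝 (0:ℝ)) (𝓝 0) := by
      have hc : Continuous (fun t : ℝ => (2 * (∑ k ∈ Finset.range m,
          (if k = 0 then t else Real.sin (k*t)/k)) - t + Real.sin ((m:ℝ)*t)/m) / m) := by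
        have h2 : Continuous (fun u : ℝ => ∑ k ∈ Finset.range m,
            (if k = 0 then u else Real.sin (k*u)/k)) := by
          apply continuous_finset_sum
          intro k _
          by_cases hk : k = 0
          · simp only [if_pos hk]; exact continuous_id
          · simp only [if_neg hk]; fun_prop
        have h3 : Continuous (fun u : ℝ => Real.sin ((m:ℝ)*u)) := by fun_prop
        exact (((continuous_const.mul h2).sub continuous_id).add (h3.div_const _)).div_const _
      apply hc.tendsto' 0 0
      have hsum0 : (∑ k ∈ Finset.range m, (if k = 0 then (0:ℝ) else Real.sin ((k:ℝ)*0)/k)) = 0 := by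
        apply Finset.sum_eq_zero
        intro k _
        by_cases hk : k = 0 <;> simp [hk]
      rw [hsum0]
      simp
    have hP1 : Tendsto (fun t => Real.log (4 * Real.sin (t/2)^2) * Real.sin ((m:ℝ)*t))
        (𝓝[>] (0:ℝ)) (𝓝 0) := by
      apply squeeze_zero_norm' (a := fun t => (2*(Real.log π - Real.log t) + Real.log 4)*((m:ℝ)*t))
      · filter_upwards [Ioo_mem_nhdsGT_of_mem (show (0:ℝ) ∈ Ico 0 π from ⟨le_refl 0, hπ⟩)]
          with t ht
        have hlog := aux_bound ht.1 ht.2.le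
        have hsin : |Real.sin ((m:ℝ)*t)| ≤ (m:ℝ)*t := by
          refine (Real.abs_sin_le_abs).trans ?_
          rw [abs_of_nonneg (mul_nonneg (Nat.cast_nonneg m) ht.1.le)]
        have hBnn : (0:ℝ) ≤ 2*(Real.log π - Real.log t) + Real.log 4 :=
          le_trans (abs_nonneg _) hlog
        rw [Real.norm_eq_abs, abs_mul]
        exact mul_le_mul hlog hsin (abs_nonneg _) hBnn
      · have ha1 : Tendsto (fun t : ℝ => (2*Real.log π + Real.log 4)*((m:ℝ)*t)) (𝓝[>] (0:ℝ)) (𝓝 0) := by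
          apply Tendsto.mono_left _ nhdsWithin_le_nhds
          have hc : Continuous (fun t : ℝ => (2*Real.log π + Real.log 4)*((m:ℝ)*t)) := by fun_prop
          apply hc.tendsto' 0 0
          simp
        have ha2 : Tendsto (fun t : ℝ => Real.log t * t) (𝓝[>] (0:ℝ)) (𝓝 0) := by
          simpa [Real.rpow_one] using tendsto_log_mul_rpow_nhdsGT_zero one_pos
        have h := ha1.sub (ha2.const_mul (2*(m:ℝ)))
        rw [show (0:ℝ) - 2*(m:ℝ)*0 = 0 by ring] at h
        have he : (fun t : ℝ => (2*(Real.log π - Real.log t) + Real.log 4)*((m:ℝ)*t))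
            = fun t : ℝ => (2*Real.log π + Real.log 4)*((m:ℝ)*t) - 2*(m:ℝ)*(Real.log t * t) := by
          funext t; ring
        rw [he]
        exact h
    have := (hP1.div_const (m:ℝ)).sub (hP2.mono_left nhdsWithin_le_nhds)
    rw [show (0:ℝ)/m - 0 = 0 by ring] at this
    exact this
  have := intervalIntegral.integral_eq_sub_of_hasDerivAt_of_tendsto hπ hderiv hint haa hbb
  rw [this]
  ring



lemma aux_key2 (m : ℕ) (hm : 0 < m) :
    ∫ t in (-π)..π, Real.log (4 * Real.sin (t/2)^2) * Real.cos ((m:ℝ)*t) = -(2*π)/m := by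
  have hm' : (m:ℝ) ≠ 0 := Nat.cast_ne_zero.mpr hm.ne'
  have hcont : Continuous (fun t : ℝ => Real.cos ((m:ℝ)*t)) := by fun_prop
  have hI1 : IntervalIntegrable (fun t => Real.log (4 * Real.sin (t/2)^2) * Real.cos ((m:ℝ)*t))
      volume (-π) 0 := (aux_intInt _ _).mul_continuousOn hcont.continuousOn
  have hI2 : IntervalIntegrable (fun t => Real.log (4 * Real.sin (t/2)^2) * Real.cos ((m:ℝ)*t))
      volume 0 π := (aux_intInt _ _).mul_continuousOn hcont.continuousOn
  have heven : (∫ t in (-π)..(0:ℝ), Real.log (4 * Real.sin (t/2)^2) * Real.cos ((m:ℝ)*t))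
      = ∫ t in (0:ℝ)..π, Real.log (4 * Real.sin (t/2)^2) * Real.cos ((m:ℝ)*t) := by
    have h := intervalIntegral.integral_comp_neg
      (fun t => Real.log (4 * Real.sin (t/2)^2) * Real.cos ((m:ℝ)*t)) (a := 0) (b := π)
    have he : ∀ t : ℝ, Real.log (4 * Real.sin ((-t)/2)^2) * Real.cos ((m:ℝ)*(-t))
        = Real.log (4 * Real.sin (t/2)^2) * Real.cos ((m:ℝ)*t) := by
      intro t
      rw [show (-t)/2 = -(t/2) by ring, Real.sin_neg, neg_sq, mul_neg, Real.cos_neg]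
    simp only [he] at h
    rw [neg_zero] at h
    exact h.symm
  have hsplit := intervalIntegral.integral_add_adjacent_intervals hI1 hI2
  rw [heven, aux_key m hm] at hsplit
  rw [← hsplit]
  ring

theorem stmt_16 (L : ℝ) (hL : 0 < L) (m : ℕ) (hm : 0 < m) (x : ℝ) :
    -(1 / (4 * π)) * ∫ x₀ in (-L)..L,
        Real.log (4 * Real.sin ((π / (2 * L)) * (x - x₀)) ^ 2)
          * Real.cos ((m * π / L) * x₀)
      = (L / (2 * π * m)) * Real.cos ((m * π / L) * x) := by
  have hπ := Real.pi_pos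
  have hm' : (m:ℝ) ≠ 0 := Nat.cast_ne_zero.mpr hm.ne'
  set c : ℝ := π / L with hc_def
  set b : ℝ := (m:ℝ) * π / L with hb_def
  have hc : c ≠ 0 := div_ne_zero hπ.ne' hL.ne'
  have hcL : c * L = π := div_mul_cancel₀ π hL.ne'
  set φ : ℝ → ℝ := fun u => Real.log (4 * Real.sin (c*u/2)^2) * Real.cos (b*x - b*u) with hφ_def
  -- rewrite integrand
  have hpt : ∀ x₀ : ℝ, Real.log (4 * Real.sin ((π / (2 * L)) * (x - x₀)) ^ 2)
      * Real.cos (((m:ℝ) * π / L) * x₀) = φ (x - x₀) := by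
    intro x₀
    have e1 : (π / (2 * L)) * (x - x₀) = c*(x - x₀)/2 := by
      rw [hc_def, show (2:ℝ)*L = L*2 by ring, ← div_div]; ring
    have e2 : ((m:ℝ) * π / L) * x₀ = b*x - b*(x - x₀) := by rw [hb_def]; ring
    rw [e1, e2]
  rw [intervalIntegral.integral_congr (g := fun x₀ => φ (x - x₀)) (fun x₀ _ => hpt x₀)]
  -- shift
  rw [intervalIntegral.integral_comp_sub_left φ x, sub_neg_eq_add]
  -- periodicity
  have hφper : Function.Periodic φ (2*L) := by
    intro u
    show Real.log (4 * Real.sin (c*(u+2*L)/2)^2) * Real.cos (b*x - b*(u+2*L)) = _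
    have e1 : c*(u+2*L)/2 = c*u/2 + π := by rw [mul_add, ← hcL]; ring
    have e2 : b*x - b*(u+2*L) = (b*x - b*u) - (m:ℤ)*(2*π) := by
      push_cast
      rw [hb_def]
      field_simp
      ring
    rw [e1, e2, Real.sin_add_pi, neg_sq, Real.cos_sub_int_mul_two_pi]
  have hshift := hφper.intervalIntegral_add_eq (x - L) (-L)
  rw [show x - L + 2*L = x + L by ring, show -L + 2*L = L by ring] at hshift
  rw [hshift]
  -- split into even/odd parts
  have hIc : IntervalIntegrable (fun u => Real.log (4 * Real.sin ((c*u)/2)^2)) volume (-L) L := by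
    have h := (aux_intInt (c*(-L)) (c*L)).comp_mul_left (c := c)
    rwa [mul_div_cancel_left₀ _ hc, mul_div_cancel_left₀ _ hc] at h
  have hI1 : IntervalIntegrable (fun u => Real.log (4 * Real.sin ((c*u)/2)^2) * Real.cos (b*u))
      volume (-L) L := hIc.mul_continuousOn (Continuous.continuousOn (by fun_prop))
  have hI2 : IntervalIntegrable (fun u => Real.log (4 * Real.sin ((c*u)/2)^2) * Real.sin (b*u))
      volume (-L) L := hIc.mul_continuousOn (Continuous.continuousOn (by fun_prop))
  have hsplit : ∀ u : ℝ, φ u = Real.cos (b*x) * (Real.log (4 * Real.sin ((c*u)/2)^2) * Real.cos (b*u))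
      + Real.sin (b*x) * (Real.log (4 * Real.sin ((c*u)/2)^2) * Real.sin (b*u)) := by
    intro u
    show Real.log (4 * Real.sin (c*u/2)^2) * Real.cos (b*x - b*u) = _
    rw [Real.cos_sub]
    ring
  rw [intervalIntegral.integral_congr (g := fun u => Real.cos (b*x) * (Real.log (4 * Real.sin ((c*u)/2)^2) * Real.cos (b*u))
      + Real.sin (b*x) * (Real.log (4 * Real.sin ((c*u)/2)^2) * Real.sin (b*u))) (fun u _ => hsplit u)]
  rw [intervalIntegral.integral_add (hI1.const_mul _) (hI2.const_mul _),
    intervalIntegral.integral_const_mul, intervalIntegral.integral_const_mul]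
  -- odd part vanishes
  have hodd : (∫ u in (-L)..L, Real.log (4 * Real.sin ((c*u)/2)^2) * Real.sin (b*u)) = 0 := by
    have h := intervalIntegral.integral_comp_neg
      (fun u => Real.log (4 * Real.sin ((c*u)/2)^2) * Real.sin (b*u)) (a := -L) (b := L)
    have he : ∀ u : ℝ, Real.log (4 * Real.sin ((c*(-u))/2)^2) * Real.sin (b*(-u))
        = -(Real.log (4 * Real.sin ((c*u)/2)^2) * Real.sin (b*u)) := by
      intro u
      rw [show (c*(-u))/2 = -((c*u)/2) by ring, Real.sin_neg, neg_sq, mul_neg, Real.sin_neg]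
      ring
    simp only [he] at h
    rw [intervalIntegral.integral_neg, neg_neg] at h
    linarith [h]
  -- even part via scaling
  have hA : (∫ u in (-L)..L, Real.log (4 * Real.sin ((c*u)/2)^2) * Real.cos (b*u))
      = c⁻¹ * (-(2*π)/m) := by
    have hbu : ∀ u : ℝ, Real.log (4 * Real.sin ((c*u)/2)^2) * Real.cos (b*u)
        = (fun v => Real.log (4 * Real.sin (v/2)^2) * Real.cos ((m:ℝ)*v)) (c*u) := by
      intro u
      have hbu' : b*u = (m:ℝ)*(c*u) := by rw [hb_def, hc_def]; ring
      simp only [hbu']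
    rw [intervalIntegral.integral_congr (g := fun u => (fun v => Real.log (4 * Real.sin (v/2)^2) * Real.cos ((m:ℝ)*v)) (c*u)) (fun u _ => hbu u)]
    have h2 := intervalIntegral.integral_comp_mul_left (a := -L) (b := L) (c := c)
      (fun v => Real.log (4 * Real.sin (v/2)^2) * Real.cos ((m:ℝ)*v)) hc
    rw [show c*(-L) = -π by rw [mul_neg, hcL], show c*L = π from hcL,
      aux_key2 m hm, smul_eq_mul] at h2
    exact h2
  rw [hodd, hA]
  have hcinv : c⁻¹ = L / π := by rw [hc_def]; rw [inv_div]
  rw [hcinv]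
  field_simp
  ring

end
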